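/- For all real (or complex) s, t: ∫₀ˢ (∂/∂t){t+u brace u} du = 2s(s+1)C₂(st) + s²(t+s)C₃(st), where the integrand's partial derivative is taken before integration and C_ν denotes the Bessel-Clifford function. -/

import Mathlib

/-- The real Bessel–Clifford function of the first kind `C_ν(z) = ∑ z^m/(m!(m+ν)!)`. -/
noncomputable def besselCliffordR (ν : ℕ) (z : ℝ) : ℝ :=
  ∑' m : ℕ, z ^ m / ((Nat.factorial m : ℝ) * (Nat.factorial (m + ν) : ℝ))

/-- The (real) continuous binomial coefficient `{t brace a}`. -/
noncomputable def contBinomR (t a : ℝ) : ℝ :=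
  2 * ∑' n : ℕ, a ^ n * (t - a) ^ n / ((Nat.factorial n : ℝ) ^ 2) +
    t * ∑' n : ℕ, a ^ n * (t - a) ^ n / ((Nat.factorial (n + 1) : ℝ) * (Nat.factorial n : ℝ))

open scoped Nat

lemma bc_summable_aux (R : ℝ) : Summable (fun m : ℕ => (m : ℝ) * R ^ (m - 1) / (m)!) := by
  rw [← summable_nat_add_iff 1]
  have h : (fun m : ℕ => ((m + 1 : ℕ) : ℝ) * R ^ (m + 1 - 1) / ((m + 1 : ℕ))!) =
      fun m : ℕ => R ^ m / (m)! := by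
    funext m
    have h1 : (((m + 1 : ℕ))! : ℝ) = ((m : ℝ) + 1) * ((m)! : ℝ) := by
      rw [Nat.factorial_succ]; push_cast; ring
    have h2 : ((m)! : ℝ) ≠ 0 := by positivity
    simp only [Nat.add_sub_cancel, h1]
    push_cast
    field_simp
  rw [h]
  exact Real.summable_pow_div_factorial R

lemma bc_fact_le (m ν : ℕ) : ((m)! : ℝ) ≤ ((m)! : ℝ) * ((m + ν)! : ℝ) := by
  have h1 : (1 : ℝ) ≤ ((m + ν)! : ℝ) := by
    exact_mod_cast Nat.one_le_iff_ne_zero.mpr (Nat.factorial_pos _).ne'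
  have h2 : (0 : ℝ) < ((m)! : ℝ) := by positivity
  nlinarith

lemma bc_summable (ν : ℕ) (z : ℝ) :
    Summable (fun m : ℕ => z ^ m / (((m)! : ℝ) * (((m + ν))! : ℝ))) := by
  apply Summable.of_norm
  refine Summable.of_nonneg_of_le (fun m => norm_nonneg _) (fun m => ?_)
    (Real.summable_pow_div_factorial |z|)
  rw [Real.norm_eq_abs, abs_div, abs_pow]
  have h1 : |((m)! : ℝ) * (((m + ν))! : ℝ)| = ((m)! : ℝ) * (((m + ν))! : ℝ) := abs_of_nonneg (by positivity)
  rw [h1]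
  gcongr
  all_goals first
    | exact Nat.cast_pos.mpr (Nat.factorial_pos m)
    | exact bc_fact_le m ν
    | positivity

lemma bc_summable_deriv (ν : ℕ) (z : ℝ) :
    Summable (fun m : ℕ => (m : ℝ) * z ^ (m - 1) / (((m)! : ℝ) * (((m + ν))! : ℝ))) := by
  apply Summable.of_norm
  refine Summable.of_nonneg_of_le (fun m => norm_nonneg _) (fun m => ?_) (bc_summable_aux |z|)
  rw [Real.norm_eq_abs, abs_div, abs_mul, abs_pow, Nat.abs_cast]
  have h1 : |((m)! : ℝ) * (((m + ν))! : ℝ)| = ((m)! : ℝ) * (((m + ν))! : ℝ) := abs_of_nonneg (by positivity)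
  rw [h1]
  gcongr
  all_goals first
    | exact Nat.cast_pos.mpr (Nat.factorial_pos m)
    | exact bc_fact_le m ν
    | positivity

lemma bc_summable_deriv2 (ν : ℕ) (z : ℝ) :
    Summable (fun m : ℕ => (m : ℝ) * z ^ m / (((m)! : ℝ) * (((m + ν))! : ℝ))) := by
  apply Summable.of_norm
  have haux : Summable (fun m : ℕ => |z| * ((m : ℝ) * |z| ^ (m - 1) / (m)!)) :=
    (bc_summable_aux |z|).mul_left |z|
  have haux2 : Summable (fun m : ℕ => (m : ℝ) * |z| ^ m / (m)!) := by
    refine haux.congr (fun m => ?_)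
    rcases m with _ | m
    · simp
    · simp only [Nat.add_sub_cancel]
      rw [pow_succ]
      ring
  refine Summable.of_nonneg_of_le (fun m => norm_nonneg _) (fun m => ?_) haux2
  rw [Real.norm_eq_abs, abs_div, abs_mul, abs_pow, Nat.abs_cast]
  have h1 : |((m)! : ℝ) * (((m + ν))! : ℝ)| = ((m)! : ℝ) * (((m + ν))! : ℝ) := abs_of_nonneg (by positivity)
  rw [h1]
  gcongr
  all_goals first
    | exact Nat.cast_pos.mpr (Nat.factorial_pos m)
    | exact bc_fact_le m ν
    | positivity

lemma bc_tsum_deriv (ν : ℕ) (z : ℝ) :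
    (∑' m : ℕ, (m : ℝ) * z ^ (m - 1) / (((m)! : ℝ) * (((m + ν))! : ℝ))) =
      besselCliffordR (ν + 1) z := by
  rw [Summable.tsum_eq_zero_add (bc_summable_deriv ν z)]
  unfold besselCliffordR
  simp only [Nat.cast_zero, zero_mul, zero_div, zero_add]
  apply tsum_congr
  intro m
  have h1 : (((m + 1 : ℕ))! : ℝ) = ((m : ℝ) + 1) * ((m)! : ℝ) := by
    rw [Nat.factorial_succ]; push_cast; ring
  have h2 : m + 1 + ν = m + (ν + 1) := by ring
  rw [h2, Nat.add_sub_cancel, h1]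
  have h3 : ((m)! : ℝ) ≠ 0 := by positivity
  have h4 : (((m + (ν + 1)))! : ℝ) ≠ 0 := by positivity
  push_cast
  field_simp

lemma hasDerivAt_bc (ν : ℕ) (z : ℝ) :
    HasDerivAt (besselCliffordR ν) (besselCliffordR (ν + 1) z) z := by
  have hR : |z| < |z| + 1 := by linarith
  have key : HasDerivAt (fun y => ∑' m : ℕ, y ^ m / (((m)! : ℝ) * (((m + ν))! : ℝ)))
      (∑' m : ℕ, (m : ℝ) * z ^ (m - 1) / (((m)! : ℝ) * (((m + ν))! : ℝ))) z := by
    set R : ℝ := |z| + 1 with hRdef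
    apply hasDerivAt_tsum_of_isPreconnected
      (u := fun m : ℕ => (m : ℝ) * R ^ (m - 1) / (m)!)
      (t := Metric.ball (0 : ℝ) R) (y₀ := z)
      (g' := fun m y => (m : ℝ) * y ^ (m - 1) / (((m)! : ℝ) * (((m + ν))! : ℝ)))
    · exact bc_summable_aux R
    · exact Metric.isOpen_ball
    · exact (convex_ball 0 R).isPreconnected
    · intro n y _
      have h := (hasDerivAt_pow n y).mul_const ((((n)! : ℝ) * (((n + ν))! : ℝ))⁻¹)
      simpa [div_eq_mul_inv, mul_assoc] using h
    · intro n y hy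
      rw [Metric.mem_ball, Real.dist_eq, sub_zero] at hy
      rw [Real.norm_eq_abs, abs_div, abs_mul, abs_pow, Nat.abs_cast]
      have h1 : |((n)! : ℝ) * (((n + ν))! : ℝ)| = ((n)! : ℝ) * (((n + ν))! : ℝ) := abs_of_nonneg (by positivity)
      rw [h1]
      have habs : |y| ^ (n - 1) ≤ R ^ (n - 1) :=
        pow_le_pow_left₀ (abs_nonneg y) hy.le _
      gcongr
      all_goals first
        | exact Nat.cast_pos.mpr (Nat.factorial_pos n)
        | exact bc_fact_le n ν
        | exact habs
        | positivity
    · simpa [Real.dist_eq] using hR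
    · exact bc_summable ν z
    · simpa [Real.dist_eq] using hR
  rw [bc_tsum_deriv] at key
  exact key

lemma bc_cont (ν : ℕ) : Continuous (besselCliffordR ν) := by
  have h : Differentiable ℝ (besselCliffordR ν) := fun z => (hasDerivAt_bc ν z).differentiableAt
  exact h.continuous

lemma bc_shift (ν : ℕ) (z : ℝ) :
    z * besselCliffordR (ν + 2) z =
      ∑' m : ℕ, (m : ℝ) * z ^ m / (((m)! : ℝ) * (((m + (ν + 1)))! : ℝ)) := by
  rw [Summable.tsum_eq_zero_add (bc_summable_deriv2 (ν + 1) z)]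
  unfold besselCliffordR
  rw [← tsum_mul_left]
  simp only [Nat.cast_zero, zero_mul, zero_div, zero_add]
  apply tsum_congr
  intro m
  have h1 : (((m + 1 : ℕ))! : ℝ) = ((m : ℝ) + 1) * ((m)! : ℝ) := by
    rw [Nat.factorial_succ]; push_cast; ring
  have h2 : m + 1 + (ν + 1) = m + (ν + 2) := by ring
  rw [h2, h1]
  have h3 : ((m)! : ℝ) ≠ 0 := by positivity
  have h4 : (((m + (ν + 2)))! : ℝ) ≠ 0 := by positivity
  push_cast
  field_simp
  ring

lemma bc_rec (ν : ℕ) (z : ℝ) :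
    besselCliffordR ν z =
      ((ν : ℝ) + 1) * besselCliffordR (ν + 1) z + z * besselCliffordR (ν + 2) z := by
  rw [bc_shift ν z]
  unfold besselCliffordR
  rw [← tsum_mul_left,
    ← Summable.tsum_add ((bc_summable (ν + 1) z).mul_left _) (bc_summable_deriv2 (ν + 1) z)]
  apply tsum_congr
  intro m
  have h1 : (((m + (ν + 1)))! : ℝ) = ((m : ℝ) + (ν : ℝ) + 1) * (((m + ν))! : ℝ) := by
    have h : m + (ν + 1) = (m + ν) + 1 := by ring
    rw [h, Nat.factorial_succ]
    push_cast
    ring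
  rw [h1]
  have h3 : ((m)! : ℝ) ≠ 0 := by positivity
  have h4 : (((m + ν))! : ℝ) ≠ 0 := by positivity
  have h5 : ((m : ℝ) + (ν : ℝ) + 1) ≠ 0 := by positivity
  field_simp
  ring

lemma contBinomR_eq (x u : ℝ) :
    contBinomR (x + u) u =
      2 * besselCliffordR 0 (u * x) + (x + u) * besselCliffordR 1 (u * x) := by
  unfold contBinomR besselCliffordR
  have hx : x + u - u = x := by ring
  rw [hx]
  congr 1
  · congr 1
    apply tsum_congr
    intro n
    rw [mul_pow]
    simp only [Nat.add_zero]
    ring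
  · congr 1
    apply tsum_congr
    intro n
    rw [mul_pow]
    ring

lemma hasDerivAt_main (u t : ℝ) :
    HasDerivAt (fun x : ℝ => contBinomR (x + u) u)
      ((2 * u + 1) * besselCliffordR 1 (u * t) +
        u * (t + u) * besselCliffordR 2 (u * t)) t := by
  have hfun : (fun x : ℝ => contBinomR (x + u) u) =
      fun x => 2 * besselCliffordR 0 (u * x) + (x + u) * besselCliffordR 1 (u * x) :=
    funext fun x => contBinomR_eq x u
  rw [hfun]
  have hinner : HasDerivAt (fun x : ℝ => u * x) u t := by
    simpa using (hasDerivAt_id t).const_mul u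
  have h0 : HasDerivAt (fun x : ℝ => besselCliffordR 0 (u * x))
      (besselCliffordR 1 (u * t) * u) t := (hasDerivAt_bc 0 (u * t)).comp t hinner
  have h1 : HasDerivAt (fun x : ℝ => besselCliffordR 1 (u * x))
      (besselCliffordR 2 (u * t) * u) t := (hasDerivAt_bc 1 (u * t)).comp t hinner
  have H := (h0.const_mul 2).add (((hasDerivAt_id t).add_const u).mul h1)
  refine H.congr_deriv ?_
  simp only [id_eq]
  ring

lemma hasDerivAt_G (t u : ℝ) :
    HasDerivAt (fun u : ℝ => 2 * u * (u + 1) * besselCliffordR 2 (u * t) +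
        u ^ 2 * (t + u) * besselCliffordR 3 (u * t))
      ((2 * u + 1) * besselCliffordR 1 (u * t) +
        u * (t + u) * besselCliffordR 2 (u * t)) u := by
  have hinner : HasDerivAt (fun x : ℝ => x * t) t u := hasDerivAt_mul_const t
  have h2 : HasDerivAt (fun x : ℝ => besselCliffordR 2 (x * t))
      (besselCliffordR 3 (u * t) * t) u := by
    have := (hasDerivAt_bc 2 (u * t)).comp u hinner; exact this
  have h3 : HasDerivAt (fun x : ℝ => besselCliffordR 3 (x * t))
      (besselCliffordR 4 (u * t) * t) u := by
    have := (hasDerivAt_bc 3 (u * t)).comp u hinner; exact this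
  have p1 : HasDerivAt (fun x : ℝ => 2 * x * (x + 1)) (2 * (u + 1) + 2 * u * 1) u := by
    exact (((hasDerivAt_id u).const_mul 2).mul ((hasDerivAt_id u).add_const 1)).congr_deriv (by simp)
  have p2 : HasDerivAt (fun x : ℝ => x ^ 2 * (t + x))
      (((2 : ℕ) : ℝ) * u ^ 1 * (t + u) + u ^ 2 * 1) u :=
    (hasDerivAt_pow 2 u).mul ((hasDerivAt_id u).const_add t)
  have H := (p1.mul h2).add (p2.mul h3)
  refine H.congr_deriv ?_
  have r1 := bc_rec 1 (u * t)
  have r2 := bc_rec 2 (u * t)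
  norm_num at r1 r2
  rw [r1, r2]
  push_cast
  ring

theorem integral_deriv_contBinom (s t : ℝ) :
    ∫ u in (0:ℝ)..s, deriv (fun t' : ℝ => contBinomR (t' + u) u) t =
      2 * s * (s + 1) * besselCliffordR 2 (s * t) +
        s ^ 2 * (t + s) * besselCliffordR 3 (s * t) := by
  have hderiv : ∀ u : ℝ, deriv (fun t' : ℝ => contBinomR (t' + u) u) t =
      (2 * u + 1) * besselCliffordR 1 (u * t) + u * (t + u) * besselCliffordR 2 (u * t) :=
    fun u => (hasDerivAt_main u t).deriv
  simp only [hderiv]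
  have hcont : Continuous (fun u : ℝ =>
      (2 * u + 1) * besselCliffordR 1 (u * t) + u * (t + u) * besselCliffordR 2 (u * t)) := by
    apply Continuous.add
    · exact ((continuous_const.mul continuous_id).add continuous_const).mul
        ((bc_cont 1).comp (continuous_id.mul continuous_const))
    · exact (continuous_id.mul (continuous_const.add continuous_id)).mul
        ((bc_cont 2).comp (continuous_id.mul continuous_const))
  rw [intervalIntegral.integral_eq_sub_of_hasDerivAt
    (f := fun u : ℝ => 2 * u * (u + 1) * besselCliffordR 2 (u * t) +
      u ^ 2 * (t + u) * besselCliffordR 3 (u * t))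
    (fun u _ => hasDerivAt_G t u) (hcont.intervalIntegrable 0 s)]
  norm_num
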